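/- With the B_2 root data in ℚ², let α, β ∈ Φ⁺ = {(0,1), (1,−1), (1,0), (1,1)} (possibly equal) and let w be a signed permutation of ℚ² such that μ = w·(−α−β) = w(−α−β+ρ) − ρ is dominant. Then μ ∈ {(0,0), (1,0)}. Moreover, μ = (1,0) = α_1+α_2 occurs if and only if α = β = α_2 = (1,−1) and w is the linear map (x,y) ↦ (y,−x); this w satisfies ℓ(w) = 2, so the pair (−2α_2, w) is the unique pair producing the dominant weight α_1+α_2. -/

import Mathlib

/-- The positive roots of B₂ realized in ℚ². -/
def B2PosRoots : Finset (ℚ × ℚ) := {(0, 1), (1, -1), (1, 0), (1, 1)}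

/-- ρ = (3/2, 1/2) for B₂. -/
def B2rho : ℚ × ℚ := (3 / 2, 1 / 2)

/-- The dot action w·λ = w(λ+ρ) − ρ. -/
def B2dot (w : ℚ × ℚ → ℚ × ℚ) (lam : ℚ × ℚ) : ℚ × ℚ := w (lam + B2rho) - B2rho

/-- λ is dominant iff λ₁ ≥ λ₂ ≥ 0. -/
def B2IsDominant (lam : ℚ × ℚ) : Prop := lam.2 ≤ lam.1 ∧ 0 ≤ lam.2

/-- ℓ(w) = #{γ ∈ Φ⁺ : w(γ) ∈ −Φ⁺}. -/
def B2len (w : ℚ × ℚ → ℚ × ℚ) : ℕ :=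
  (B2PosRoots.filter fun γ => -(w γ) ∈ B2PosRoots).card

/-- The Weyl group of B₂: the 8 signed permutations of the two coordinates of ℚ². -/
def IsSignedPerm (w : ℚ × ℚ → ℚ × ℚ) : Prop :=
  ∃ (s : Bool) (e1 e2 : ℚ), (e1 = 1 ∨ e1 = -1) ∧ (e2 = 1 ∨ e2 = -1) ∧
    ∀ v : ℚ × ℚ, w v = if s then (e1 * v.2, e2 * v.1) else (e1 * v.1, e2 * v.2)

/-- In type B₂, for positive roots α, β (possibly equal) and a signed permutation w with
μ = w·(−α−β) dominant: μ ∈ {(0,0), (1,0)}; moreover μ = (1,0) = α₁+α₂ iff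
α = β = α₂ = (1,−1) and w is (x,y) ↦ (y,−x), and in that case ℓ(w) = 2. -/
theorem B2_dot_neg_two_roots_classification (α β : ℚ × ℚ)
    (hα : α ∈ B2PosRoots) (hβ : β ∈ B2PosRoots)
    (w : ℚ × ℚ → ℚ × ℚ) (hw : IsSignedPerm w)
    (hdom : B2IsDominant (B2dot w (-α - β))) :
    (B2dot w (-α - β) = (0, 0) ∨ B2dot w (-α - β) = (1, 0)) ∧
    (B2dot w (-α - β) = (1, 0) ↔
      (α = (1, -1) ∧ β = (1, -1) ∧ ∀ v : ℚ × ℚ, w v = (v.2, -v.1))) ∧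
    (B2dot w (-α - β) = (1, 0) → B2len w = 2) := by
  obtain ⟨s, e1, e2, he1, he2, hweq⟩ := hw
  have hwfun : w = fun v => if s then (e1 * v.2, e2 * v.1) else (e1 * v.1, e2 * v.2) :=
    funext hweq
  subst hwfun
  simp only [B2PosRoots, Finset.mem_insert, Finset.mem_singleton] at hα hβ
  rcases s with _ | _ <;> rcases he1 with rfl | rfl <;> rcases he2 with rfl | rfl <;>
    rcases hα with rfl | rfl | rfl | rfl <;> rcases hβ with rfl | rfl | rfl | rfl <;>
    first
      | (exfalso; revert hdom; norm_num [B2dot, B2rho, B2IsDominant, Prod.ext_iff]; done)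
      | (refine ⟨Or.inl ?_,
            iff_of_false ?_ (by rintro ⟨h1, h2, -⟩; revert h1 h2; norm_num [Prod.ext_iff]; done),
            fun h => absurd h ?_⟩ <;>
          (norm_num [B2dot, B2rho, Prod.ext_iff]; done))
      | (refine ⟨Or.inr ?_,
            ⟨fun _ => ⟨rfl, rfl, fun v => by norm_num⟩,
             fun _ => by norm_num [B2dot, B2rho, Prod.ext_iff]⟩,
            fun _ => by norm_num [B2len, B2PosRoots, Finset.filter_insert,
              Finset.filter_singleton]⟩ <;>
          norm_num [B2dot, B2rho, Prod.ext_iff])
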